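/- Let k, m, m′, n be positive integers with k ≥ 2, let p, q ∈ [1,∞], let ε ≥ 0, and let η < 1/binom(n,k) be a nonnegative real. Suppose there exists a probability measure μ on the space of real m′×m matrices such that for every x ∈ ℝ^m, μ{R : (1−ε)·‖x‖_p ≤ ‖R·x‖_q ≤ (1+ε)·‖x‖_p} ≥ 1 − η. Then for every n-point space (X, d) ∈ C_{k,p}^m there exists a space (X, d′) ∈ C_{k,q}^{m′} such that (1−ε)·d(t) ≤ d′(t) ≤ (1+ε)·d(t) for every t = (x_1,…,x_k) ∈ X^k. -/

import Mathlib

open scoped BigOperators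

/-- An alternating real-valued function on `j`-tuples of `X`
(a `(j-1)`-dimensional chain on the complete complex on `X`). -/
def AltChain {X : Type*} {j : ℕ} (α : (Fin j → X) → ℝ) : Prop :=
  ∀ (π : Equiv.Perm (Fin j)) (x : Fin j → X),
    α (x ∘ π) = ((Equiv.Perm.sign π : ℤ) : ℝ) * α x

/-- The boundary operator: `(∂α)(y₁,…,y_j) = ∑_{x ∈ X} α(x, y₁, …, y_j)`. -/
noncomputable def bdry {X : Type*} [Fintype X] {j : ℕ}
    (α : (Fin (j + 1) → X) → ℝ) : (Fin j → X) → ℝ :=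
  fun y => ∑ x : X, α (Fin.cons x y)

/-- The elementary chain `1_t`: value `sign π` on the reordering of `t` by `π`,
and `0` on all other tuples. -/
noncomputable def unitChain {X : Type*} [DecidableEq X] {j : ℕ} (t : Fin j → X) :
    (Fin j → X) → ℝ :=
  fun s => ∑ π : Equiv.Perm (Fin j),
    if s = t ∘ π then ((Equiv.Perm.sign π : ℤ) : ℝ) else 0

/-- The coboundary operator:
`(δf)(x₁,…,x_{j+2}) = ∑ᵢ (-1)^(i+1) f(x₁,…,x̂ᵢ,…,x_{j+2})` (`0`-indexed sign `(-1)^i`). -/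
noncomputable def cobdry {X : Type*} {j : ℕ}
    (f : (Fin (j + 1) → X) → ℝ) : (Fin (j + 2) → X) → ℝ :=
  fun x => ∑ i : Fin (j + 2), (-1 : ℝ) ^ (i : ℕ) * f (x ∘ i.succAbove)

/-- A pseudo metric of arity `K` (a pseudo `K`-metric): nonnegative, vanishing on
non-injective tuples, permutation invariant, satisfying the simplex inequality. -/
structure IsPseudoMetric {X : Type*} (K : ℕ) (d : (Fin K → X) → ℝ) : Prop where
  nonneg : ∀ x, 0 ≤ d x
  eq_zero : ∀ x, ¬ Function.Injective x → d x = 0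
  perm : ∀ (π : Equiv.Perm (Fin K)) (x), d (x ∘ π) = d x
  simplex : ∀ (x : Fin K → X) (y : X),
    d x ≤ ∑ i : Fin K, d (Function.update x i y)

/-- A strong pseudo metric of arity `k + 1` (a strong pseudo `(k+1)`-metric).
The strong simplex inequality `d t ≤ ∑_τ |α(τ)| * d(τ)` (with the sum over
`(k+1)`-element subsets `τ` of `X`, each evaluated on any fixed ordering of `τ`)
is stated in the equivalent form `(k+1)! * d t ≤ ∑_s |α(s)| * d(s)` with the sum
over all `(k+1)`-tuples `s`: since `α` is alternating and `d` is permutation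
invariant, the summand depends only on the underlying set of `s` (it vanishes on
tuples with repeated entries), and each `(k+1)`-element subset has exactly
`(k+1)!` orderings. -/
structure IsStrongPseudoMetric {X : Type*} [Fintype X] [DecidableEq X] (k : ℕ)
    (d : (Fin (k + 1) → X) → ℝ) : Prop where
  nonneg : ∀ x, 0 ≤ d x
  eq_zero : ∀ x, ¬ Function.Injective x → d x = 0
  perm : ∀ (π : Equiv.Perm (Fin (k + 1))) (x), d (x ∘ π) = d x
  strong_simplex : ∀ t : Fin (k + 1) → X, Function.Injective t →
    ∀ α : (Fin (k + 1) → X) → ℝ, AltChain α → bdry α = bdry (unitChain t) →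
      ((k + 1).factorial : ℝ) * d t ≤ ∑ s : Fin (k + 1) → X, |α s| * d s

/-- `(X, d)` is a coboundary metric of arity `k + 2` in `m` dimensions with respect
to the norm `ν` on `ℝ^m`: there are chains `f 1, …, f m` on `(k+1)`-tuples (i.e.
`(k+2)-2`-dimensional chains for arity `k+2`) whose simultaneous coboundary
realizes `d` on injective tuples, and `d` vanishes on non-injective tuples. -/
def IsCoboundaryMetric {X : Type*} (k m : ℕ) (ν : (Fin m → ℝ) → ℝ)
    (d : (Fin (k + 2) → X) → ℝ) : Prop :=
  ∃ f : Fin m → ((Fin (k + 1) → X) → ℝ),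
    (∀ i, AltChain (f i)) ∧
    (∀ x, Function.Injective x → d x = ν (fun i => cobdry (f i) x)) ∧
    (∀ x, ¬ Function.Injective x → d x = 0)

/-- `ν` is a norm on `ℝ^m`. -/
structure IsNorm {m : ℕ} (ν : (Fin m → ℝ) → ℝ) : Prop where
  nonneg : ∀ x, 0 ≤ ν x
  eq_zero_iff : ∀ x, ν x = 0 ↔ x = 0
  homog : ∀ (c : ℝ) (x), ν (c • x) = |c| * ν x
  triangle : ∀ x y, ν (x + y) ≤ ν x + ν y

/-- The `ℓ_p` norm on `ℝ^m` for real `p`. -/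
noncomputable def lpNorm (p : ℝ) {m : ℕ} (x : Fin m → ℝ) : ℝ :=
  (∑ i, |x i| ^ p) ^ (1 / p)

/-- The `ℓ_1` norm on `ℝ^m`. -/
noncomputable def l1Norm {m : ℕ} (x : Fin m → ℝ) : ℝ := ∑ i, |x i|

/-- The `ℓ_2` (Euclidean) norm on `ℝ^m`. -/
noncomputable def l2Norm {m : ℕ} (x : Fin m → ℝ) : ℝ := Real.sqrt (∑ i, x i ^ 2)

/-- The `ℓ_∞` norm on `ℝ^m` (the sup norm, which is the norm of `Fin m → ℝ`). -/
noncomputable def linfNorm {m : ℕ} (x : Fin m → ℝ) : ℝ := ‖x‖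

/- The apex extension of `d` (of arity `K`), with the apex being
`none : Option X` (a new element not in `X`): on an injective `(K+1)`-tuple
containing the apex in position `i` it is `d` of the tuple with position `i`
removed, and it is `0` on all other tuples. -/
open Classical in
noncomputable def apexExt {X : Type*} {K : ℕ} (d : (Fin K → X) → ℝ) :
    (Fin (K + 1) → Option X) → ℝ := fun x =>
  if h : Function.Injective x ∧ ∃ i, x i = none then
    d (fun j =>
      Option.get (x ((Classical.choose h.2).succAbove j))
        (by
          rw [Option.isSome_iff_ne_none]
          intro hnone
          exact Fin.succAbove_ne (Classical.choose h.2) j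
            (h.1 (hnone.trans (Classical.choose_spec h.2).symm))))
  else 0

/-- The `K`-dimensional volume of the simplex with vertices `y 0, …, y K` in `ℝ^m`:
`(1/K!) * √(det (AᵀA))` where `A` is the `m × K` matrix with columns
`y i - y 0`, `i = 1, …, K`. -/
noncomputable def simplexVolume {m K : ℕ} (y : Fin (K + 1) → (Fin m → ℝ)) : ℝ :=
  (1 / (K.factorial : ℝ)) *
    Real.sqrt
      (Matrix.det
        (Matrix.of fun i j : Fin K =>
          ∑ l : Fin m, (y i.succ l - y 0 l) * (y j.succ l - y 0 l)))

/-- The `ℓ_p` norm on `ℝ^m` for `p : ℝ≥0∞` with `1 ≤ p`. -/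
noncomputable def lpNormE (p : ENNReal) [Fact (1 ≤ p)] {m : ℕ} (x : Fin m → ℝ) :
    ℝ := ‖(WithLp.equiv p (Fin m → ℝ)).symm x‖

section AuxAlt

-- (A) arbitrary swap of two non-i points commutes with succAbove
lemma swap_comp_succAbove {n : ℕ} (i u v : Fin (n + 1))
    (u' v' : Fin n) (hu' : i.succAbove u' = u) (hv' : i.succAbove v' = v) (y : Fin n) :
    Equiv.swap u v (i.succAbove y) = i.succAbove (Equiv.swap u' v' y) := by
  rcases eq_or_ne y u' with rfl | hyu
  · rw [hu', Equiv.swap_apply_left, Equiv.swap_apply_left, hv']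
  rcases eq_or_ne y v' with rfl | hyv
  · rw [hv', Equiv.swap_apply_right, Equiv.swap_apply_right, hu']
  · rw [Equiv.swap_apply_of_ne_of_ne (fun h => hyu (Fin.succAbove_right_injective (h.trans hu'.symm)))
      (fun h => hyv (Fin.succAbove_right_injective (h.trans hv'.symm))),
      Equiv.swap_apply_of_ne_of_ne hyu hyv]

-- (B) adjacent swap moves succAbove castSucc to succAbove succ
lemma swap_comp_succAbove_castSucc {n : ℕ} (c : Fin (n + 1)) (y : Fin (n + 1)) :
    Equiv.swap c.castSucc c.succ (c.castSucc.succAbove y) = c.succ.succAbove y := by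
  rcases lt_trichotomy (y : ℕ) (c : ℕ) with h | h | h
  · have h1 : c.castSucc.succAbove y = y.castSucc := by
      apply Fin.succAbove_of_castSucc_lt
      simp [Fin.lt_def, h]
    have h2 : c.succ.succAbove y = y.castSucc := by
      apply Fin.succAbove_of_castSucc_lt
      simp [Fin.lt_def]; omega
    rw [h1, h2, Equiv.swap_apply_of_ne_of_ne]
    · exact Fin.ne_of_val_ne (by simp; omega)
    · exact Fin.ne_of_val_ne (by simp; omega)
  · have h1 : c.castSucc.succAbove y = y.succ := by
      apply Fin.succAbove_of_le_castSucc
      simp [Fin.le_def, h]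
    have h2 : c.succ.succAbove y = y.castSucc := by
      apply Fin.succAbove_of_castSucc_lt
      simp [Fin.lt_def]; omega
    have h3 : y.succ = c.succ := Fin.ext (by simp [h])
    rw [h1, h3, Equiv.swap_apply_right, h2]
    exact Fin.ext (by simp [h])
  · have h1 : c.castSucc.succAbove y = y.succ := by
      apply Fin.succAbove_of_le_castSucc
      simp only [Fin.le_def, Fin.coe_castSucc]; omega
    have h2 : c.succ.succAbove y = y.succ := by
      apply Fin.succAbove_of_le_castSucc
      simp only [Fin.le_def, Fin.coe_castSucc, Fin.val_succ]; omega
    rw [h1, h2, Equiv.swap_apply_of_ne_of_ne]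
    · exact Fin.ne_of_val_ne (by simp; omega)
    · exact Fin.ne_of_val_ne (by simp; omega)

lemma cobdry_comp_adj_swap {X : Type*} {j : ℕ} {f : (Fin (j + 1) → X) → ℝ}
    (hf : AltChain f) (c : Fin (j + 1)) (x : Fin (j + 2) → X) :
    cobdry f (x ∘ (Equiv.swap c.castSucc c.succ : Equiv.Perm (Fin (j + 2)))) = - cobdry f x := by
  set σ : Equiv.Perm (Fin (j + 2)) := Equiv.swap c.castSucc c.succ with hσ
  have hcs : c.castSucc ≠ c.succ := (Fin.castSucc_lt_succ (i := c)).ne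
  have key : ∀ i : Fin (j + 2),
      (-1 : ℝ) ^ (i : ℕ) * f ((x ∘ ⇑σ) ∘ i.succAbove)
        = -((-1 : ℝ) ^ ((σ i : Fin (j + 2)) : ℕ) * f (x ∘ (σ i).succAbove)) := by
    intro i
    rcases eq_or_ne i c.castSucc with rfl | hic
    · have h1 : (x ∘ ⇑σ) ∘ c.castSucc.succAbove = x ∘ c.succ.succAbove := by
        funext y
        exact congrArg x (swap_comp_succAbove_castSucc c y)
      have h2 : σ c.castSucc = c.succ := Equiv.swap_apply_left _ _
      rw [h1, h2]
      have e1 : ((c.succ : Fin (j + 2)) : ℕ) = (c : ℕ) + 1 := rfl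
      have e2 : ((Fin.castSucc c : Fin (j + 2)) : ℕ) = (c : ℕ) := rfl
      rw [e1, e2]; ring
    rcases eq_or_ne i c.succ with rfl | his
    · have h1 : (x ∘ ⇑σ) ∘ c.succ.succAbove = x ∘ c.castSucc.succAbove := by
        funext y
        refine congrArg x ?_
        have h := swap_comp_succAbove_castSucc c y
        calc Equiv.swap c.castSucc c.succ (c.succ.succAbove y)
            = Equiv.swap c.castSucc c.succ
                (Equiv.swap c.castSucc c.succ (c.castSucc.succAbove y)) := by rw [h]
          _ = c.castSucc.succAbove y := Equiv.swap_apply_self _ _ _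
      have h2 : σ c.succ = c.castSucc := Equiv.swap_apply_right _ _
      rw [h1, h2]
      have e1 : ((c.succ : Fin (j + 2)) : ℕ) = (c : ℕ) + 1 := rfl
      have e2 : ((Fin.castSucc c : Fin (j + 2)) : ℕ) = (c : ℕ) := rfl
      rw [e1, e2]; ring
    · obtain ⟨u', hu'⟩ := Fin.exists_succAbove_eq (Ne.symm hic)
      obtain ⟨v', hv'⟩ := Fin.exists_succAbove_eq (Ne.symm his)
      have huv : u' ≠ v' := fun h => hcs (hu'.symm.trans (h ▸ hv'))
      have h1 : (x ∘ ⇑σ) ∘ i.succAbove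
          = (x ∘ i.succAbove) ∘ (Equiv.swap u' v' : Equiv.Perm (Fin (j + 1))) := by
        funext y
        exact congrArg x (swap_comp_succAbove i c.castSucc c.succ u' v' hu' hv' y)
      have h2 : σ i = i := Equiv.swap_apply_of_ne_of_ne hic his
      rw [h1, hf (Equiv.swap u' v') (x ∘ i.succAbove), Equiv.Perm.sign_swap huv, h2]
      push_cast
      ring
  calc cobdry f (x ∘ ⇑σ)
      = ∑ i : Fin (j + 2), -((-1 : ℝ) ^ ((σ i : Fin (j + 2)) : ℕ) * f (x ∘ (σ i).succAbove)) := by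
        unfold cobdry
        exact Finset.sum_congr rfl fun i _ => key i
    _ = -∑ i : Fin (j + 2), (-1 : ℝ) ^ ((σ i : Fin (j + 2)) : ℕ) * f (x ∘ (σ i).succAbove) := by
        rw [Finset.sum_neg_distrib]
    _ = - cobdry f x := by
        unfold cobdry
        congr 1
        exact Equiv.sum_comp σ fun i => (-1 : ℝ) ^ (i : ℕ) * f (x ∘ i.succAbove)

lemma AltChain.cobdry_alt {X : Type*} {j : ℕ} {f : (Fin (j + 1) → X) → ℝ}
    (hf : AltChain f) : AltChain (cobdry f) := by
  have H : ∀ π : Equiv.Perm (Fin (j + 2)), π ∈ Submonoid.closure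
      (Set.range fun i : Fin (j + 1) => Equiv.swap i.castSucc i.succ) →
      ∀ x : Fin (j + 2) → X,
        cobdry f (x ∘ π) = ((Equiv.Perm.sign π : ℤ) : ℝ) * cobdry f x := by
    intro π hmem
    induction hmem using Submonoid.closure_induction with
    | mem σ hσ =>
      obtain ⟨c, rfl⟩ := hσ
      intro x
      rw [cobdry_comp_adj_swap hf c x, Equiv.Perm.sign_swap (Fin.castSucc_lt_succ (i := c)).ne]
      push_cast; ring
    | one => intro x; simp
    | mul σ τ _ _ hσ hτ =>
      intro x
      have hc : x ∘ ⇑(σ * τ) = (x ∘ ⇑σ) ∘ ⇑τ := rfl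
      rw [hc, hτ (x ∘ ⇑σ), hσ x, map_mul, Units.val_mul, Int.cast_mul]
      ring
  intro π x
  exact H π (by rw [Equiv.Perm.mclosure_swap_castSucc_succ]; trivial) x

end AuxAlt

section AuxNorm

lemma lpNormE_smul (p : ENNReal) [Fact (1 ≤ p)] {m : ℕ} (c : ℝ) (x : Fin m → ℝ) :
    lpNormE p (c • x) = |c| * lpNormE p x := by
  unfold lpNormE
  rw [WithLp.equiv_symm_apply, WithLp.toLp_smul, norm_smul, Real.norm_eq_abs]

lemma measurable_lpnorm_mul (q : ENNReal) [Fact (1 ≤ q)] {m m' : ℕ} (v : Fin m → ℝ) :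
    Measurable fun R : Fin m' → Fin m → ℝ => lpNormE q (fun i => ∑ j, R i j * v j) := by
  have hc : Continuous fun R : Fin m' → Fin m → ℝ =>
      lpNormE q (fun i => ∑ j, R i j * v j) := by
    unfold lpNormE
    apply Continuous.norm
    apply (PiLp.continuous_toLp (p := q) (β := fun _ : Fin m' => ℝ)).comp
    apply continuous_pi
    intro i
    apply continuous_finset_sum
    intro j _
    exact (continuous_apply_apply i j).mul continuous_const
  exact hc.measurable

lemma exists_perm_comp {X : Type*} {K : ℕ} {x t : Fin K → X}
    (hx : Function.Injective x) (ht : Function.Injective t)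
    (h : Set.range x = Set.range t) : ∃ π : Equiv.Perm (Fin K), x = t ∘ π := by
  refine ⟨(Equiv.ofInjective x hx).trans ((Equiv.setCongr h).trans
    (Equiv.ofInjective t ht).symm), ?_⟩
  funext i
  simp only [Function.comp_apply, Equiv.trans_apply]
  rw [Equiv.apply_ofInjective_symm ht]
  rfl

end AuxNorm

/-- if there is a probability distribution over `m' × m` matrices
that, for each fixed vector, preserves the (`ℓ_p` to `ℓ_q`) norm to within a
`1 ± ε` factor with probability `≥ 1 − η` where `η < 1/binom(n, k)`,
then every `n`-point coboundary metric of arity `k + 2` in `C_{k,p}^m` is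
`(1 ± ε)`-approximated by one in `C_{k,q}^{m'}`. -/
theorem stmt_11 (k m m' n : ℕ) (hk2 : 1 ≤ k + 2) (hm : 1 ≤ m) (hm' : 1 ≤ m')
    (hn : 1 ≤ n) (p q : ENNReal) [Fact (1 ≤ p)] [Fact (1 ≤ q)]
    (ε η : ℝ) (hε : 0 ≤ ε) (hη : 0 ≤ η) (hηn : η < 1 / (n.choose (k + 2) : ℝ))
    (μ : MeasureTheory.Measure (Fin m' → Fin m → ℝ))
    [MeasureTheory.IsProbabilityMeasure μ]
    (hμ : ∀ x : Fin m → ℝ,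
      ENNReal.ofReal (1 - η) ≤
        μ {R | (1 - ε) * lpNormE p x ≤ lpNormE q (fun i => ∑ j, R i j * x j) ∧
               lpNormE q (fun i => ∑ j, R i j * x j) ≤ (1 + ε) * lpNormE p x}) :
    ∀ (X : Type) [Fintype X] [DecidableEq X], Fintype.card X = n →
      ∀ d : (Fin (k + 2) → X) → ℝ, IsCoboundaryMetric k m (lpNormE p) d →
        ∃ d' : (Fin (k + 2) → X) → ℝ,
          IsCoboundaryMetric k m' (lpNormE q) d' ∧
            ∀ t : Fin (k + 2) → X, (1 - ε) * d t ≤ d' t ∧ d' t ≤ (1 + ε) * d t := by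
  intro X _ _ hcard d hd
  classical
  obtain ⟨f, hfalt, hfinj, hfnon⟩ := hd
  have hCpos : 0 < (n.choose (k + 2) : ℝ) := by
    by_contra hle
    push_neg at hle
    have h0 : (n.choose (k + 2) : ℝ) = 0 := le_antisymm hle (by positivity)
    rw [h0] at hηn
    simp at hηn
    linarith
  have hCη : (n.choose (k + 2) : ℝ) * η < 1 := by
    have := mul_lt_mul_of_pos_left hηn hCpos
    rwa [mul_one_div, div_self hCpos.ne'] at this
  -- the vector associated to a tuple
  set v : (Fin (k + 2) → X) → (Fin m → ℝ) := fun x jj => cobdry (f jj) x with hv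
  -- the good set of matrices for a vector
  set A : (Fin m → ℝ) → Set (Fin m' → Fin m → ℝ) := fun w =>
    {R | (1 - ε) * lpNormE p w ≤ lpNormE q (fun i => ∑ j, R i j * w j) ∧
         lpNormE q (fun i => ∑ j, R i j * w j) ≤ (1 + ε) * lpNormE p w} with hA
  have hAmeas : ∀ w, MeasurableSet (A w) := by
    intro w
    have he : A w = (fun R : Fin m' → Fin m → ℝ =>
        lpNormE q (fun i => ∑ j, R i j * w j)) ⁻¹'
        (Set.Icc ((1 - ε) * lpNormE p w) ((1 + ε) * lpNormE p w)) := rfl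
    rw [he]
    exact (measurable_lpnorm_mul q w) measurableSet_Icc
  have hAc : ∀ w, μ (A w)ᶜ ≤ ENNReal.ofReal η := by
    intro w
    have hC1 : (1 : ℝ) ≤ (n.choose (k + 2) : ℝ) := by
      have h2 : 0 < n.choose (k + 2) := by exact_mod_cast hCpos
      exact Nat.one_le_cast.mpr h2
    have hη1 : η ≤ 1 := by nlinarith
    have h1 : μ (A w)ᶜ = 1 - μ (A w) :=
      MeasureTheory.prob_compl_eq_one_sub (hAmeas w)
    have hsplit : (1 : ENNReal) = ENNReal.ofReal η + ENNReal.ofReal (1 - η) := by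
      rw [← ENNReal.ofReal_add hη (by linarith), ← ENNReal.ofReal_one]
      norm_num
    rw [h1]
    calc 1 - μ (A w) ≤ 1 - ENNReal.ofReal (1 - η) := tsub_le_tsub_left (hμ w) 1
      _ = ENNReal.ofReal η := by
          rw [hsplit, ENNReal.add_sub_cancel_right ENNReal.ofReal_ne_top]
  have hAsmul : ∀ (c : ℝ), |c| = 1 → ∀ w (R : Fin m' → Fin m → ℝ),
      R ∈ A (c • w) ↔ R ∈ A w := by
    intro c hc w R
    have h1 : lpNormE p (c • w) = lpNormE p w := by rw [lpNormE_smul, hc, one_mul]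
    have h2 : (fun i => ∑ j, R i j * (c • w) j) =
        c • (fun i => ∑ j, R i j * w j) := by
      funext i
      simp only [Pi.smul_apply, smul_eq_mul, Finset.mul_sum]
      exact Finset.sum_congr rfl fun j _ => by ring
    have h3 : lpNormE q (fun i => ∑ j, R i j * (c • w) j)
        = lpNormE q (fun i => ∑ j, R i j * w j) := by
      rw [h2, lpNormE_smul, hc, one_mul]
    simp only [hA, Set.mem_setOf_eq, h1, h3]
  -- linear order on X and representative tuples
  letI : LinearOrder X := LinearOrder.lift' (fun a => (Fintype.equivFin X) a)
    (Equiv.injective _)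
  set P : Finset (Finset X) := Finset.powersetCard (k + 2) (Finset.univ : Finset X)
    with hP
  set rep : {s // s ∈ P} → (Fin (k + 2) → X) := fun s i =>
    ((s.1.orderIsoOfFin ((Finset.mem_powersetCard.mp s.2).2) i : X)) with hrep
  have hrep_inj : ∀ s, Function.Injective (rep s) := by
    intro s a b hab
    exact (s.1.orderIsoOfFin _).injective (Subtype.coe_injective hab)
  have hrep_range : ∀ s, Set.range (rep s) = ↑s.1 := by
    intro s
    ext a
    constructor
    · rintro ⟨i, rfl⟩
      exact (s.1.orderIsoOfFin _ i).2
    · intro ha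
      exact ⟨(s.1.orderIsoOfFin ((Finset.mem_powersetCard.mp s.2).2)).symm ⟨a, ha⟩,
        congrArg Subtype.val
          ((s.1.orderIsoOfFin ((Finset.mem_powersetCard.mp s.2).2)).apply_symm_apply ⟨a, ha⟩)⟩
  set T : Finset (Fin (k + 2) → X) := P.attach.image rep with hT
  have hTcard : T.card ≤ n.choose (k + 2) := by
    calc T.card ≤ P.attach.card := Finset.card_image_le
      _ = P.card := Finset.card_attach
      _ = n.choose (k + 2) := by
          rw [hP, Finset.card_powersetCard, Finset.card_univ, hcard]
  have hkey : ∀ x : Fin (k + 2) → X, Function.Injective x →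
      ∃ t ∈ T, ∃ c : ℝ, |c| = 1 ∧ v x = c • v t := by
    intro x hx
    have hcards : (Finset.univ.image x).card = k + 2 := by
      rw [Finset.card_image_of_injective _ hx, Finset.card_univ, Fintype.card_fin]
    have hs : Finset.univ.image x ∈ P :=
      Finset.mem_powersetCard.mpr ⟨Finset.subset_univ _, hcards⟩
    refine ⟨rep ⟨_, hs⟩, Finset.mem_image_of_mem rep (Finset.mem_attach _ _), ?_⟩
    have hrange : Set.range x = Set.range (rep ⟨_, hs⟩) := by
      rw [hrep_range]
      simp
    obtain ⟨π, hπ⟩ := exists_perm_comp hx (hrep_inj _) hrange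
    set t := rep ⟨Finset.image x Finset.univ, hs⟩ with hts
    refine ⟨((Equiv.Perm.sign π : ℤ) : ℝ), ?_, ?_⟩
    · rcases Int.units_eq_one_or (Equiv.Perm.sign π) with h | h <;> rw [h] <;> norm_num
    · funext jj
      simp only [hv, Pi.smul_apply, smul_eq_mul]
      rw [hπ]
      exact (hfalt jj).cobdry_alt π t
  -- find one good matrix R
  set U : Set (Fin m' → Fin m → ℝ) := ⋃ t ∈ T, (A (v t))ᶜ with hU
  have hUlt : μ U < 1 := by
    calc μ U ≤ ∑ t ∈ T, μ (A (v t))ᶜ := MeasureTheory.measure_biUnion_finset_le T _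
      _ ≤ ∑ _t ∈ T, ENNReal.ofReal η := Finset.sum_le_sum fun t _ => hAc _
      _ = (T.card : ENNReal) * ENNReal.ofReal η := by
          rw [Finset.sum_const, nsmul_eq_mul]
      _ ≤ ((n.choose (k + 2) : ℕ) : ENNReal) * ENNReal.ofReal η :=
          mul_le_mul_left (by exact_mod_cast Nat.cast_le.mpr hTcard) _
      _ = ENNReal.ofReal ((n.choose (k + 2) : ℝ) * η) := by
          rw [ENNReal.ofReal_mul (by positivity), ENNReal.ofReal_natCast]
      _ < 1 := by
          rw [← ENNReal.ofReal_one]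
          exact (ENNReal.ofReal_lt_ofReal_iff one_pos).mpr hCη
  have hUne : U ≠ Set.univ := by
    intro h
    rw [h, MeasureTheory.measure_univ] at hUlt
    exact lt_irrefl _ hUlt
  obtain ⟨R, hR⟩ := (Set.ne_univ_iff_exists_notMem U).mp hUne
  have hRT : ∀ t ∈ T, R ∈ A (v t) := by
    intro t ht
    by_contra hne
    exact hR (Set.mem_biUnion ht hne)
  have hRgood : ∀ x, Function.Injective x → R ∈ A (v x) := by
    intro x hx
    obtain ⟨t, htT, c, hc, hvx⟩ := hkey x hx
    rw [hvx]
    exact (hAsmul c hc (v t) R).mpr (hRT t htT)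
  -- the approximating metric
  refine ⟨fun x => if Function.Injective x then
      lpNormE q (fun i => ∑ jj, R i jj * v x jj) else 0, ?_, ?_⟩
  · refine ⟨fun i y => ∑ jj, R i jj * f jj y, ?_, ?_, ?_⟩
    · intro i π y
      simp only
      rw [Finset.mul_sum]
      refine Finset.sum_congr rfl fun jj _ => ?_
      rw [hfalt jj π y]
      ring
    · intro x hx
      simp only
      rw [if_pos hx]
      congr 1
      funext i
      show (∑ jj, R i jj * v x jj) = cobdry (fun y => ∑ jj, R i jj * f jj y) x
      simp only [hv]
      unfold cobdry
      simp only [Finset.mul_sum]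
      rw [Finset.sum_comm]
      refine Finset.sum_congr rfl fun a _ => Finset.sum_congr rfl fun jj _ => by ring
    · intro x hx
      simp only
      rw [if_neg hx]
  · intro t
    by_cases ht : Function.Injective t
    · simp only
      rw [if_pos ht, hfinj t ht]
      exact hRgood t ht
    · simp only
      rw [if_neg ht, hfnon t ht]
      constructor <;> simp [hε] <;> nlinarith
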